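/- For every t₀ > 0 there exists a constant c > 0, depending only on L and t₀, such that p_N(t,x,y) ≥ c for all t ≥ t₀ and all x, y ∈ [0, L]. -/

import Mathlib

open MeasureTheory Real

/-- The Neumann heat kernel on `[0,L]`. -/
noncomputable def neumannKernel (L t x y : ℝ) : ℝ :=
  1 / L + (2 / L) * ∑' n : ℕ,
    Real.exp (-((n:ℝ)+1)^2 * Real.pi^2 * t / (2*L^2)) *
      Real.cos (((n:ℝ)+1) * Real.pi * x / L) * Real.cos (((n:ℝ)+1) * Real.pi * y / L)


section Aux
open Filter

lemma summable_nat_exp (c : ℝ) (hc : 0 < c) :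
    Summable (fun n : ℕ => Real.exp (-c * (n:ℝ)^2)) := by
  refine Summable.of_nonneg_of_le (fun n => (Real.exp_pos _).le)
    (fun n => ?_) (summable_geometric_of_lt_one (Real.exp_pos (-c)).le
      (Real.exp_lt_one_iff.2 (by linarith)))
  rw [← Real.exp_nat_mul]
  apply Real.exp_le_exp.2
  have h : (n:ℝ) ≤ (n:ℝ)^2 := by exact_mod_cast Nat.le_self_pow two_ne_zero n
  nlinarith [mul_le_mul_of_nonneg_left h hc.le]

lemma summable_int_exp (c : ℝ) (hc : 0 < c) :
    Summable (fun n : ℤ => Real.exp (-c * (n:ℝ)^2)) := by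
  refine Summable.of_nat_of_neg ?_ ?_ <;>
  · simpa using summable_nat_exp c hc

lemma theta_eq (a u : ℝ) (ha : 0 < a) :
    ∑' n : ℤ, Real.exp (-π * a * (n:ℝ)^2) * Real.cos (2*π*u*(n:ℝ))
      = (a ^ (1/2:ℝ))⁻¹ * ∑' n : ℤ, Real.exp (-π / a * ((n:ℝ) - u)^2) := by
  have ha' : 0 < (a:ℂ).re := by simpa using ha
  have h0 := Complex.tsum_exp_neg_quadratic ha' (Complex.I * u)
  have hw : ∀ n : ℤ, (-(π:ℂ) * a * (n:ℂ)^2 + 2*π*(Complex.I*u)*(n:ℂ))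
      = ((-π*a*(n:ℝ)^2 : ℝ):ℂ) + ((2*π*u*(n:ℝ) : ℝ):ℂ) * Complex.I := by
    intro n; push_cast; ring
  have hsummC : Summable (fun n : ℤ =>
      Complex.exp (-(π:ℂ) * a * (n:ℂ)^2 + 2*π*(Complex.I*u)*(n:ℂ))) := by
    refine Summable.of_norm_bounded (summable_int_exp (π*a) (by positivity)) (fun n => ?_)
    rw [Complex.norm_exp, hw]
    apply le_of_eq
    congr 1
    rw [Complex.add_re, Complex.ofReal_re, Complex.re_ofReal_mul, Complex.I_re]
    ring
  have hterm : ∀ n : ℤ, (Complex.exp (-(π:ℂ) * a * (n:ℂ)^2 + 2*π*(Complex.I*u)*(n:ℂ))).re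
      = Real.exp (-π * a * (n:ℝ)^2) * Real.cos (2*π*u*(n:ℝ)) := by
    intro n
    rw [hw, Complex.exp_add, ← Complex.ofReal_exp, Complex.re_ofReal_mul,
      Complex.exp_ofReal_mul_I_re]
  have hre : ∑' n : ℤ, Real.exp (-π * a * (n:ℝ)^2) * Real.cos (2*π*u*(n:ℝ))
      = (∑' n : ℤ, Complex.exp (-(π:ℂ) * a * (n:ℂ)^2 + 2*π*(Complex.I*u)*(n:ℂ))).re := by
    rw [Complex.re_tsum hsummC]
    exact tsum_congr fun n => (hterm n).symm
  have hRHSterm : ∀ n : ℤ, Complex.exp (-(π:ℂ) / a * ((n:ℂ) + Complex.I * (Complex.I * u))^2)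
      = ((Real.exp (-π / a * ((n:ℝ) - u)^2) : ℝ) : ℂ) := by
    intro n
    rw [Complex.ofReal_exp]
    congr 1
    have : (Complex.I * (Complex.I * (u:ℂ))) = -(u:ℂ) := by
      rw [← mul_assoc, Complex.I_mul_I]; ring
    rw [this]
    push_cast
    ring
  have hsqrt : ((a:ℂ) ^ (1/2:ℂ)) = ((a ^ (1/2:ℝ) : ℝ) : ℂ) := by
    rw [Complex.ofReal_cpow ha.le]
    norm_num
  rw [hre, h0]
  rw [tsum_congr hRHSterm, ← Complex.ofReal_tsum, hsqrt]
  rw [← Complex.ofReal_one, ← Complex.ofReal_div, ← Complex.ofReal_mul]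
  rw [Complex.ofReal_re]
  rw [one_div]

lemma theta_lower (a u : ℝ) (ha : 0 < a) (hu : u^2 ≤ 1) :
    Real.exp (-π/a) / a ^ (1/2:ℝ) ≤
      1 + 2 * ∑' n : ℕ, Real.exp (-π*a*((n:ℝ)+1)^2) * Real.cos (2*π*u*((n:ℝ)+1)) := by
  set g : ℤ → ℝ := fun n => Real.exp (-π * a * (n:ℝ)^2) * Real.cos (2*π*u*(n:ℝ)) with hg
  have hbd : ∀ n : ℤ, ‖g n‖ ≤ Real.exp (-π * a * (n:ℝ)^2) := by
    intro n
    rw [hg]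
    simp only [norm_mul, Real.norm_eq_abs, Real.abs_exp]
    calc Real.exp (-π * a * (n:ℝ)^2) * |Real.cos (2*π*u*(n:ℝ))|
        ≤ Real.exp (-π * a * (n:ℝ)^2) * 1 :=
          mul_le_mul_of_nonneg_left (Real.abs_cos_le_one _) (Real.exp_pos _).le
      _ = _ := mul_one _
  have hgN : Summable (fun n : ℕ => g n) := by
    refine Summable.of_norm_bounded (summable_nat_exp (π*a) (by positivity)) (fun n => ?_)
    simpa using hbd n
  have heven : ∀ n : ℕ, g (-((n:ℤ)+1)) = g ((n:ℤ)+1) := by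
    intro n
    simp only [hg]
    push_cast
    rw [show (-((n:ℝ)+1))^2 = ((n:ℝ)+1)^2 by ring, show 2*π*u*(-((n:ℝ)+1)) = -(2*π*u*((n:ℝ)+1)) by ring,
      Real.cos_neg]
  have hgN1 : Summable (fun n : ℕ => g ((n:ℤ)+1)) := by
    have := (summable_nat_add_iff (f := fun n : ℕ => g n) 1).2 hgN
    refine this.congr (fun n => ?_)
    congr 1 <;> (try push_cast) <;> (try ring)
  have hsplit : ∑' n : ℤ, g n = 1 + 2 * ∑' n : ℕ, g ((n:ℤ)+1) := by
    rw [tsum_of_nat_of_neg_add_one hgN (by exact hgN1.congr (fun n => (heven n).symm))]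
    rw [tsum_congr heven]
    rw [Summable.tsum_eq_zero_add hgN]
    have hg0 : g ((0:ℕ):ℤ) = 1 := by simp [hg]
    have hfun : (fun n : ℕ => g (((n+1 : ℕ)):ℤ)) = fun n : ℕ => g ((n:ℤ)+1) := by
      funext n; congr 1 <;> (try push_cast) <;> (try ring)
    rw [hg0, hfun]
    ring
  have hterm2 : ∀ n : ℕ, g ((n:ℤ)+1) = Real.exp (-π*a*((n:ℝ)+1)^2) * Real.cos (2*π*u*((n:ℝ)+1)) := by
    intro n; simp only [hg]; push_cast; ring_nf
  have hSsum : Summable (fun n : ℤ => Real.exp (-π / a * ((n:ℝ) - u)^2)) := by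
    refine Summable.of_norm_bounded ((summable_int_exp (π/(2*a)) (by positivity)).mul_left
      (Real.exp (π/a))) (fun n => ?_)
    rw [Real.norm_eq_abs, Real.abs_exp, ← Real.exp_add]
    apply Real.exp_le_exp.2
    rw [neg_div]
    have hc : 0 < π / a := by positivity
    have key : ((n:ℝ))^2/2 - 1 ≤ ((n:ℝ) - u)^2 := by nlinarith [sq_nonneg ((n:ℝ) - 2*u)]
    have h1 : (π/a) * ((n:ℝ)^2/2) - (π/a) ≤ (π/a) * ((n:ℝ)-u)^2 := by nlinarith
    have h2 : π/(2*a) * (n:ℝ)^2 = (π/a) * ((n:ℝ)^2/2) := by ring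
    linarith
  have hS0 : Real.exp (-π/a) ≤ ∑' n : ℤ, Real.exp (-π / a * ((n:ℝ) - u)^2) := by
    have h0 := Summable.le_tsum hSsum 0 (fun i _ => (Real.exp_pos _).le)
    refine le_trans ?_ h0
    apply Real.exp_le_exp.2
    have hc : 0 < π / a := by positivity
    push_cast
    rw [neg_div]
    nlinarith [mul_le_mul_of_nonneg_left hu hc.le]
  have hmain := theta_eq a u ha
  rw [hsplit, tsum_congr hterm2] at hmain
  rw [hmain, div_eq_inv_mul]
  exact mul_le_mul_of_nonneg_left hS0 (by positivity)

lemma summable_shift (c : ℝ) (hc : 0 < c) (f : ℕ → ℝ) (hf : ∀ n, |f n| ≤ 1) :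
    Summable (fun n : ℕ => Real.exp (-c*((n:ℝ)+1)^2) * f n) := by
  refine Summable.of_norm_bounded ((summable_geometric_of_lt_one (Real.exp_pos (-c)).le
    (Real.exp_lt_one_iff.2 (by linarith))).mul_left (Real.exp (-c))) (fun n => ?_)
  rw [Real.norm_eq_abs, abs_mul, Real.abs_exp]
  calc Real.exp (-c*((n:ℝ)+1)^2) * |f n| ≤ Real.exp (-c*((n:ℝ)+1)^2) * 1 :=
        mul_le_mul_of_nonneg_left (hf n) (Real.exp_pos _).le
    _ = Real.exp (-c*((n:ℝ)+1)^2) := mul_one _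
    _ ≤ Real.exp (-c) * Real.exp (-c) ^ n := by
        rw [← Real.exp_nat_mul, ← Real.exp_add]
        apply Real.exp_le_exp.2
        nlinarith [Nat.cast_nonneg (α := ℝ) n, sq_nonneg ((n:ℝ))]

lemma coscos_abs (A B : ℝ) : |Real.cos A * Real.cos B| ≤ 1 := by
  rw [abs_mul]
  calc |Real.cos A| * |Real.cos B| ≤ 1 * 1 :=
    mul_le_mul (Real.abs_cos_le_one A) (Real.abs_cos_le_one B) (abs_nonneg _) zero_le_one
  _ = 1 := mul_one _

lemma kernel_eq (L t x y : ℝ) (hL : 0 < L) (ht : 0 < t) :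
    neumannKernel L t x y = (1/(2*L)) *
      ((1 + 2 * ∑' n : ℕ, Real.exp (-π*(π*t/(2*L^2))*((n:ℝ)+1)^2) *
          Real.cos (2*π*((x-y)/(2*L))*((n:ℝ)+1)))
      + (1 + 2 * ∑' n : ℕ, Real.exp (-π*(π*t/(2*L^2))*((n:ℝ)+1)^2) *
          Real.cos (2*π*((x+y)/(2*L))*((n:ℝ)+1)))) := by
  have ha : 0 < π*t/(2*L^2) := by positivity
  have hL' : L ≠ 0 := ne_of_gt hL
  have hterm : ∀ n : ℕ,
      Real.exp (-((n:ℝ)+1)^2 * π^2 * t / (2*L^2)) *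
        Real.cos (((n:ℝ)+1) * π * x / L) * Real.cos (((n:ℝ)+1) * π * y / L)
      = (1/2) * (Real.exp (-π*(π*t/(2*L^2))*((n:ℝ)+1)^2) *
            Real.cos (2*π*((x-y)/(2*L))*((n:ℝ)+1)))
        + (1/2) * (Real.exp (-π*(π*t/(2*L^2))*((n:ℝ)+1)^2) *
            Real.cos (2*π*((x+y)/(2*L))*((n:ℝ)+1))) := by
    intro n
    have he : -((n:ℝ)+1)^2 * π^2 * t / (2*L^2) = -π*(π*t/(2*L^2))*((n:ℝ)+1)^2 := by ring
    have hA : ((n:ℝ)+1) * π * x / L - ((n:ℝ)+1) * π * y / L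
        = 2*π*((x-y)/(2*L))*((n:ℝ)+1) := by field_simp
    have hB : ((n:ℝ)+1) * π * x / L + ((n:ℝ)+1) * π * y / L
        = 2*π*((x+y)/(2*L))*((n:ℝ)+1) := by field_simp
    have hcc := Real.two_mul_cos_mul_cos (((n:ℝ)+1) * π * x / L) (((n:ℝ)+1) * π * y / L)
    rw [hA, hB] at hcc
    have h2 : Real.cos (((n:ℝ)+1) * π * x / L) * Real.cos (((n:ℝ)+1) * π * y / L)
        = (Real.cos (2*π*((x-y)/(2*L))*((n:ℝ)+1)) + Real.cos (2*π*((x+y)/(2*L))*((n:ℝ)+1)))/2 := by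
      linarith
    rw [he, mul_assoc, h2]
    ring
  have key : ∀ X : ℝ, -(π*(π*t/(2*L^2)))*X = -π*(π*t/(2*L^2))*X := fun X => by ring
  have s1 : Summable (fun n : ℕ => (1/2 : ℝ) * (Real.exp (-π*(π*t/(2*L^2))*((n:ℝ)+1)^2) *
      Real.cos (2*π*((x-y)/(2*L))*((n:ℝ)+1)))) := by
    apply Summable.mul_left
    exact (summable_shift (π*(π*t/(2*L^2))) (by positivity) _
      (fun n => Real.abs_cos_le_one _)).congr (fun n => by rw [key])
  have s2 : Summable (fun n : ℕ => (1/2 : ℝ) * (Real.exp (-π*(π*t/(2*L^2))*((n:ℝ)+1)^2) *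
      Real.cos (2*π*((x+y)/(2*L))*((n:ℝ)+1)))) := by
    apply Summable.mul_left
    exact (summable_shift (π*(π*t/(2*L^2))) (by positivity) _
      (fun n => Real.abs_cos_le_one _)).congr (fun n => by rw [key])
  rw [neumannKernel, tsum_congr hterm, Summable.tsum_add s1 s2, tsum_mul_left, tsum_mul_left]
  ring

lemma exp_pi_ge : (5:ℝ) ≤ Real.exp π := by
  have h1 : (2.7:ℝ) < Real.exp 1 := by
    have := Real.exp_one_gt_d9
    linarith
  have h3 : Real.exp 3 = Real.exp 1 ^ (3:ℕ) := by
    rw [← Real.exp_nat_mul]; norm_num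
  have h4 : (5:ℝ) ≤ Real.exp 3 := by
    rw [h3]
    have h2 : (2.7:ℝ)^(3:ℕ) ≤ Real.exp 1 ^ (3:ℕ) := pow_le_pow_left₀ (by norm_num) h1.le 3
    norm_num at h2
    linarith
  exact h4.trans (Real.exp_le_exp.2 Real.pi_gt_three.le)

lemma tail_bound (c : ℝ) (hc : π ≤ c) (f : ℕ → ℝ) (hf : ∀ n, |f n| ≤ 1) :
    |∑' n : ℕ, Real.exp (-c*((n:ℝ)+1)^2) * f n| ≤ 1/4 := by
  have hπ : 0 < π := Real.pi_pos
  have hc0 : 0 < c := lt_of_lt_of_le hπ hc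
  set q := Real.exp (-π) with hq
  have hq0 : 0 < q := Real.exp_pos _
  have hq5 : q ≤ 1/5 := by
    rw [hq, Real.exp_neg]
    rw [inv_le_comm₀ (Real.exp_pos _) (by norm_num)]
    calc (1/5 : ℝ)⁻¹ = 5 := by norm_num
      _ ≤ Real.exp π := exp_pi_ge
  have hq1 : q < 1 := by linarith
  have hgeom : Summable (fun n : ℕ => q * q ^ n) :=
    (summable_geometric_of_lt_one hq0.le hq1).mul_left q
  have hb : ∀ n : ℕ, |Real.exp (-c*((n:ℝ)+1)^2) * f n| ≤ q * q ^ n := by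
    intro n
    rw [abs_mul, Real.abs_exp, hq, ← Real.exp_nat_mul, ← Real.exp_add]
    calc Real.exp (-c*((n:ℝ)+1)^2) * |f n| ≤ Real.exp (-c*((n:ℝ)+1)^2) * 1 :=
          mul_le_mul_of_nonneg_left (hf n) (Real.exp_pos _).le
      _ = Real.exp (-c*((n:ℝ)+1)^2) := mul_one _
      _ ≤ Real.exp (-π + (n:ℝ)*(-π)) := by
          apply Real.exp_le_exp.2
          have h1 : ((n:ℝ)+1) ≤ ((n:ℝ)+1)^2 := by nlinarith [Nat.cast_nonneg (α := ℝ) n]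
          nlinarith [Nat.cast_nonneg (α := ℝ) n, mul_le_mul_of_nonneg_left h1 hc0.le]
  have hsn : Summable (fun n : ℕ => |Real.exp (-c*((n:ℝ)+1)^2) * f n|) :=
    Summable.of_nonneg_of_le (fun n => abs_nonneg _) hb hgeom
  have hsn' : Summable (fun n : ℕ => ‖Real.exp (-c*((n:ℝ)+1)^2) * f n‖) := by
    simpa only [Real.norm_eq_abs] using hsn
  calc |∑' n : ℕ, Real.exp (-c*((n:ℝ)+1)^2) * f n|
      ≤ ∑' n : ℕ, |Real.exp (-c*((n:ℝ)+1)^2) * f n| := by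
        simpa only [Real.norm_eq_abs] using norm_tsum_le_tsum_norm hsn'
    _ ≤ ∑' n : ℕ, q * q ^ n := Summable.tsum_le_tsum hb hsn hgeom
    _ = q * (1 - q)⁻¹ := by rw [tsum_mul_left, tsum_geometric_of_lt_one hq0.le hq1]
    _ ≤ 1/4 := by
        rw [← div_eq_mul_inv, div_le_iff₀ (by linarith)]
        linarith


end Aux

/-- For every `t₀ > 0` there is `c > 0`, depending only on `L` and `t₀`, with
`p_N(t,x,y) ≥ c` for all `t ≥ t₀` and `x, y ∈ [0,L]`. -/
theorem neumannKernel_lower (L : ℝ) (hL : 0 < L) (t₀ : ℝ) (ht₀ : 0 < t₀) :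
    ∃ c > (0:ℝ), ∀ t ≥ t₀, ∀ x ∈ Set.Icc (0:ℝ) L, ∀ y ∈ Set.Icc (0:ℝ) L,
      c ≤ neumannKernel L t x y := by
  have hπ := Real.pi_pos
  have ha₀ : 0 < π*t₀/(2*L^2) := by positivity
  refine ⟨min (1/(2*L)) (Real.exp (-(π/(π*t₀/(2*L^2)))) / L), lt_min (by positivity) (by positivity),
    fun t ht x hx y hy => ?_⟩
  have ht0 : 0 < t := lt_of_lt_of_le ht₀ ht
  have ha : 0 < π*t/(2*L^2) := by positivity
  have haa : π*t₀/(2*L^2) ≤ π*t/(2*L^2) := by gcongr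
  rcases le_or_gt 1 (π*t/(2*L^2)) with hbig | hsmall
  · -- large time: geometric tail bound
    have htail := tail_bound (π*(π*t/(2*L^2)))
      (by nlinarith)
      (fun n => Real.cos (((n:ℝ)+1)*π*x/L) * Real.cos (((n:ℝ)+1)*π*y/L))
      (fun n => coscos_abs _ _)
    have hker : neumannKernel L t x y = 1/L + (2/L) * ∑' n : ℕ,
        Real.exp (-(π*(π*t/(2*L^2)))*((n:ℝ)+1)^2) *
          (Real.cos (((n:ℝ)+1)*π*x/L) * Real.cos (((n:ℝ)+1)*π*y/L)) := by
      rw [neumannKernel]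
      congr 2
      apply tsum_congr
      intro n
      rw [show -((n:ℝ)+1)^2 * π^2 * t/(2*L^2) = -(π*(π*t/(2*L^2)))*((n:ℝ)+1)^2 from by ring,
        mul_assoc]
    rw [hker]
    have h1 : -(1/4 : ℝ) ≤ ∑' n : ℕ,
        Real.exp (-(π*(π*t/(2*L^2)))*((n:ℝ)+1)^2) *
          (Real.cos (((n:ℝ)+1)*π*x/L) * Real.cos (((n:ℝ)+1)*π*y/L)) := (abs_le.1 htail).1
    have h2 : (2/L) * (-(1/4):ℝ) ≤ (2/L) * ∑' n : ℕ,
        Real.exp (-(π*(π*t/(2*L^2)))*((n:ℝ)+1)^2) *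
          (Real.cos (((n:ℝ)+1)*π*x/L) * Real.cos (((n:ℝ)+1)*π*y/L)) :=
      mul_le_mul_of_nonneg_left h1 (by positivity)
    have h3 : 1/L + (2/L)*(-(1/4):ℝ) = 1/(2*L) := by field_simp; ring
    calc min (1/(2*L)) (Real.exp (-(π/(π*t₀/(2*L^2)))) / L) ≤ 1/(2*L) := min_le_left _ _
      _ ≤ _ := by linarith
  · -- small time: theta lower bound
    rw [kernel_eq L t x y hL ht0]
    have hu1 : ((x-y)/(2*L))^2 ≤ 1 := by
      rw [div_pow]
      rw [div_le_one (by positivity)]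
      nlinarith [hx.1, hx.2, hy.1, hy.2]
    have hu2 : ((x+y)/(2*L))^2 ≤ 1 := by
      rw [div_pow]
      rw [div_le_one (by positivity)]
      nlinarith [hx.1, hx.2, hy.1, hy.2]
    have h1 := theta_lower (π*t/(2*L^2)) ((x-y)/(2*L)) ha hu1
    have h2 := theta_lower (π*t/(2*L^2)) ((x+y)/(2*L)) ha hu2
    set E := Real.exp (-(π/(π*t₀/(2*L^2)))) with hEdef
    have hE1 : E ≤ Real.exp (-π/(π*t/(2*L^2))) := by
      apply Real.exp_le_exp.2
      rw [neg_div]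
      have : π/(π*t/(2*L^2)) ≤ π/(π*t₀/(2*L^2)) := by gcongr
      linarith
    have hE2 : Real.exp (-π/(π*t/(2*L^2))) ≤
        Real.exp (-π/(π*t/(2*L^2))) / (π*t/(2*L^2)) ^ (1/2:ℝ) :=
      le_div_self (Real.exp_pos _).le (Real.rpow_pos_of_pos ha _)
        (Real.rpow_le_one ha.le hsmall.le (by norm_num))
    have hth1 : E ≤ 1 + 2 * ∑' n : ℕ, Real.exp (-π*(π*t/(2*L^2))*((n:ℝ)+1)^2) *
        Real.cos (2*π*((x-y)/(2*L))*((n:ℝ)+1)) := le_trans (hE1.trans hE2) h1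
    have hth2 : E ≤ 1 + 2 * ∑' n : ℕ, Real.exp (-π*(π*t/(2*L^2))*((n:ℝ)+1)^2) *
        Real.cos (2*π*((x+y)/(2*L))*((n:ℝ)+1)) := le_trans (hE1.trans hE2) h2
    have h3 : (1/(2*L)) * (E + E) = E / L := by field_simp; ring
    calc min (1/(2*L)) (E / L) ≤ E / L := min_le_right _ _
      _ = (1/(2*L)) * (E + E) := h3.symm
      _ ≤ _ := mul_le_mul_of_nonneg_left (add_le_add hth1 hth2) (by positivity)
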